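/- Let n ≥ 2 and 1 ≤ r ≤ n−1. For a uniformly random permutation π of {1, …, n}, let E be the event that the position i_n of the maximum value n satisfies i_n > r and that the maximum of π over positions 1, …, i_n − 1 occurs within the first r positions (equivalently: the secretary stopping rule with r test samples selects the overall maximum). Then Pr(E) = (r/n) · Σ_{i=r+1}^n 1/(i−1), and this quantity is strictly greater than (r/n) · ln(n/r). -/

import Mathlib

open scoped Classical

open Finset Equiv

lemma card_eval_fiber_eq {n : ℕ} (i t t' : Fin n) :
    (univ.filter fun σ : Perm (Fin n) => σ i = t).card
      = (univ.filter fun σ : Perm (Fin n) => σ i = t').card := by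
  apply Finset.card_bij' (fun σ _ => Equiv.swap t t' * σ) (fun σ _ => Equiv.swap t t' * σ)
  · intro σ hσ
    simp only [mem_filter, mem_univ, true_and] at hσ ⊢
    rw [Perm.mul_apply, hσ, swap_apply_left]
  · intro σ hσ
    simp only [mem_filter, mem_univ, true_and] at hσ ⊢
    rw [Perm.mul_apply, hσ, swap_apply_right]
  · intro σ _; rw [← mul_assoc, Equiv.swap_mul_self, one_mul]
  · intro σ _; rw [← mul_assoc, Equiv.swap_mul_self, one_mul]

lemma key_count {n : ℕ} (i t : Fin n) :
    n * (univ.filter fun σ : Perm (Fin n) => σ i = t).card = n.factorial := by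
  have h2 : (univ : Finset (Perm (Fin n))).card
      = ∑ t' : Fin n, (univ.filter fun σ : Perm (Fin n) => σ i = t').card :=
    Finset.card_eq_sum_card_fiberwise (fun σ _ => mem_univ (σ i))
  rw [Finset.card_univ, Fintype.card_perm, Fintype.card_fin] at h2
  rw [Finset.sum_congr rfl (fun t' _ => card_eval_fiber_eq i t' t), Finset.sum_const,
    Finset.card_univ, Fintype.card_fin, smul_eq_mul] at h2
  omega

def A {n : ℕ} (t i k : Fin n) : Finset (Perm (Fin n)) :=
  univ.filter fun σ => σ i = t ∧ ∀ j : Fin n, (j : ℕ) < (i : ℕ) → σ j ≤ σ k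

lemma mem_A_map {n : ℕ} {t i : Fin n} {k k' : Fin n} (hk : (k:ℕ) < i) (hk' : (k':ℕ) < i)
    {σ : Perm (Fin n)} (hσ : σ ∈ A t i k) : σ * Equiv.swap k k' ∈ A t i k' := by
  simp only [A, mem_filter, mem_univ, true_and] at hσ ⊢
  obtain ⟨h1, h2⟩ := hσ
  constructor
  · rw [Perm.mul_apply, swap_apply_of_ne_of_ne (by intro h; subst h; omega)
      (by intro h; subst h; omega), h1]
  · intro j hj
    rw [Perm.mul_apply, Perm.mul_apply, swap_apply_right]
    have hsj : ((Equiv.swap k k' j : Fin n) : ℕ) < i := by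
      rcases eq_or_ne j k with rfl | h1'
      · rwa [swap_apply_left]
      rcases eq_or_ne j k' with rfl | h2'
      · rwa [swap_apply_right]
      · rwa [swap_apply_of_ne_of_ne h1' h2']
    exact h2 _ hsj

lemma card_A_eq {n : ℕ} (t i : Fin n) {k k' : Fin n} (hk : (k:ℕ) < i) (hk' : (k':ℕ) < i) :
    (A t i k).card = (A t i k').card := by
  apply Finset.card_bij' (fun σ _ => σ * Equiv.swap k k') (fun σ _ => σ * Equiv.swap k k')
  · intro σ hσ; exact mem_A_map hk hk' hσ
  · intro σ hσ; have := mem_A_map hk' hk hσ; rwa [Equiv.swap_comm] at this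
  · intro σ _; rw [mul_assoc, Equiv.swap_mul_self, mul_one]
  · intro σ _; rw [mul_assoc, Equiv.swap_mul_self, mul_one]

noncomputable def am {n : ℕ} (i : Fin n) (hi : 0 < (i:ℕ)) (σ : Perm (Fin n)) : Fin n :=
  σ.symm (((Finset.Iio i).image σ).max'
    (Finset.Nonempty.image ⟨⟨0, lt_of_le_of_lt (Nat.zero_le _) i.isLt⟩, by
      simp [Finset.mem_Iio, Fin.lt_def, hi]⟩ σ))

lemma am_apply {n : ℕ} (i : Fin n) (hi : 0 < (i:ℕ)) (σ : Perm (Fin n)) :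
    σ (am i hi σ) = ((Finset.Iio i).image σ).max'
      (Finset.Nonempty.image ⟨⟨0, lt_of_le_of_lt (Nat.zero_le _) i.isLt⟩, by
        simp [Finset.mem_Iio, Fin.lt_def, hi]⟩ σ) :=
  σ.apply_symm_apply _

lemma am_lt {n : ℕ} (i : Fin n) (hi : 0 < (i:ℕ)) (σ : Perm (Fin n)) :
    ((am i hi σ : Fin n) : ℕ) < i := by
  have h := Finset.max'_mem ((Finset.Iio i).image σ)
    (Finset.Nonempty.image ⟨⟨0, lt_of_le_of_lt (Nat.zero_le _) i.isLt⟩, by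
      simp [Finset.mem_Iio, Fin.lt_def, hi]⟩ σ)
  rw [Finset.mem_image] at h
  obtain ⟨j, hj, hje⟩ := h
  have : am i hi σ = j := by
    apply σ.injective
    rw [am_apply, hje]
  rw [this]
  exact Fin.lt_def.mp (Finset.mem_Iio.mp hj)

lemma le_am {n : ℕ} (i : Fin n) (hi : 0 < (i:ℕ)) (σ : Perm (Fin n))
    {j : Fin n} (hj : (j:ℕ) < i) : σ j ≤ σ (am i hi σ) := by
  rw [am_apply]
  exact Finset.le_max' _ _ (Finset.mem_image.mpr ⟨j, Finset.mem_Iio.mpr (Fin.lt_def.mpr hj), rfl⟩)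

lemma am_eq {n : ℕ} (i : Fin n) (hi : 0 < (i:ℕ)) (σ : Perm (Fin n))
    {k : Fin n} (hk : (k:ℕ) < i) (hmax : ∀ j : Fin n, (j:ℕ) < i → σ j ≤ σ k) :
    am i hi σ = k := by
  have h1 : σ (am i hi σ) ≤ σ k := hmax _ (am_lt i hi σ)
  have h2 : σ k ≤ σ (am i hi σ) := le_am i hi σ hk
  exact σ.injective (le_antisymm h1 h2)

lemma card_B_eq {n : ℕ} (t i : Fin n) (hi : 0 < (i:ℕ)) :
    (univ.filter fun σ : Perm (Fin n) => σ i = t).card = ∑ k ∈ Finset.Iio i, (A t i k).card := by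
  rw [Finset.card_eq_sum_card_fiberwise (f := am i hi) (t := Finset.Iio i)
    (fun σ _ => Finset.mem_Iio.mpr (Fin.lt_def.mpr (am_lt i hi σ)))]
  apply Finset.sum_congr rfl
  intro k hk
  have hk' : (k:ℕ) < i := Fin.lt_def.mp (Finset.mem_Iio.mp hk)
  congr 1
  ext σ
  simp only [A, Finset.mem_filter, Finset.mem_univ, true_and, Finset.filter_filter]
  constructor
  · rintro ⟨h1, h2⟩
    refine ⟨h1, fun j hj => ?_⟩
    have := le_am i hi σ hj
    rwa [h2] at this
  · rintro ⟨h1, h2⟩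
    exact ⟨h1, am_eq i hi σ hk' h2⟩

lemma card_S_eq {n r : ℕ} (t i : Fin n) (hr : 1 ≤ r) (hri : r ≤ (i:ℕ)) :
    (univ.filter fun σ : Perm (Fin n) => σ i = t ∧
        ∀ j : Fin n, (j:ℕ) < (i:ℕ) → ∃ j' : Fin n, (j':ℕ) < r ∧ σ j ≤ σ j').card
      = ∑ k ∈ (univ.filter fun k : Fin n => (k:ℕ) < r), (A t i k).card := by
  have hi : 0 < (i:ℕ) := lt_of_lt_of_le hr hri
  have hmem : ∀ σ ∈ (univ.filter fun σ : Perm (Fin n) => σ i = t ∧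
      ∀ j : Fin n, (j:ℕ) < (i:ℕ) → ∃ j' : Fin n, (j':ℕ) < r ∧ σ j ≤ σ j'),
      am i hi σ ∈ (univ.filter fun k : Fin n => (k:ℕ) < r) := by
    intro σ hσ
    simp only [Finset.mem_filter, Finset.mem_univ, true_and] at hσ ⊢
    obtain ⟨j', hj'r, hj'⟩ := hσ.2 _ (am_lt i hi σ)
    have h2 : σ j' ≤ σ (am i hi σ) := le_am i hi σ (lt_of_lt_of_le hj'r hri)
    have : am i hi σ = j' := σ.injective (le_antisymm hj' h2)
    rw [this]; exact hj'r
  rw [Finset.card_eq_sum_card_fiberwise hmem]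
  apply Finset.sum_congr rfl
  intro k hk
  have hkr : (k:ℕ) < r := by simpa using hk
  have hki : (k:ℕ) < i := lt_of_lt_of_le hkr hri
  congr 1
  ext σ
  simp only [A, Finset.mem_filter, Finset.mem_univ, true_and]
  constructor
  · rintro ⟨⟨h1, _⟩, h3⟩
    refine ⟨h1, fun j hj => ?_⟩
    have := le_am i hi σ hj
    rwa [h3] at this
  · rintro ⟨h1, h2⟩
    exact ⟨⟨h1, fun j hj => ⟨k, hkr, h2 j hj⟩⟩, am_eq i hi σ hki h2⟩

lemma card_filter_lt_fin {n r : ℕ} (h : r < n) :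
    (univ.filter fun k : Fin n => (k:ℕ) < r).card = r := by
  have : (univ.filter fun k : Fin n => (k:ℕ) < r) = Finset.Iio (⟨r, h⟩ : Fin n) := by
    ext k
    simp [Finset.mem_Iio, Fin.lt_def]
  rw [this, Fin.card_Iio]

lemma sum_Icc_eq_sum_Ico (r n : ℕ) :
    ∑ i ∈ Finset.Icc (r + 1) n, 1 / ((i : ℝ) - 1) = ∑ j ∈ Finset.Ico r n, 1 / (j : ℝ) := by
  have h : Finset.Icc (r+1) n = Finset.map (addRightEmbedding 1) (Finset.Ico r n) := by
    rw [Finset.map_add_right_Ico, ← Finset.Ico_add_one_right_eq_Icc]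
  rw [h, Finset.sum_map]
  apply Finset.sum_congr rfl
  intro j _
  simp [addRightEmbedding]

lemma log_lt_sum (r n : ℕ) (hr : 1 ≤ r) (hrn : r < n) :
    Real.log ((n : ℝ) / r) < ∑ i ∈ Finset.Ico r n, 1 / (i : ℝ) := by
  have htel : ∑ i ∈ Finset.Ico r n, (Real.log (i+1) - Real.log i) = Real.log n - Real.log r := by
    rw [Finset.sum_Ico_eq_sub _ hrn.le]
    have : ∀ k : ℕ, ∑ i ∈ range k, (Real.log (i+1) - Real.log i) = Real.log k := by
      intro k
      have := Finset.sum_range_sub (fun i : ℕ => Real.log i) k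
      simp only [Nat.cast_add, Nat.cast_one] at this ⊢
      rw [this]; simp
    rw [this, this]
  have hlog : Real.log ((n : ℝ) / r) = Real.log n - Real.log r := by
    have h1 : (0:ℝ) < r := by exact_mod_cast hr
    have h2 : (0:ℝ) < n := by exact_mod_cast hr.trans hrn.le
    rw [Real.log_div h2.ne' h1.ne']
  rw [hlog, ← htel]
  apply Finset.sum_lt_sum_of_nonempty ⟨r, by simp [hrn]⟩
  intro i hi
  simp only [Finset.mem_Ico] at hi
  have hi1 : (1:ℝ) ≤ (i:ℝ) := by exact_mod_cast hr.trans hi.1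
  have hipos : (0:ℝ) < i := by linarith
  have h1 : Real.log ((i:ℝ)+1) - Real.log i = Real.log (((i:ℝ)+1)/i) := by
    rw [Real.log_div (by positivity) (by positivity)]
  rw [h1]
  have := Real.log_lt_sub_one_of_pos (x := ((i:ℝ)+1)/i) (by positivity) (by
    intro h
    field_simp at h; linarith)
  calc Real.log (((i:ℝ)+1)/i) < ((i:ℝ)+1)/i - 1 := this
    _ = 1 / i := by field_simp; ring

/-- secretary stopping rule. For a uniformly random permutation `π` of
`Fin n` (position `i` carries value `π i`; positions and values are 0-indexed, so the
paper's 1-indexed position/value `k` is index `k-1`, and the maximum value is `n-1`),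
let `E` be the event that the position `i*` of the maximum value satisfies `i* > r`
(1-indexed), i.e. `r ≤ i*` (0-indexed), and that the maximum of `π` over the positions
strictly before `i*` is attained within the first `r` positions. Then
`Pr(E) = (r/n) · Σ_{i=r+1}^n 1/(i-1) > (r/n) · ln (n/r)`. -/
theorem stmt7 (n r : ℕ) (hn : 2 ≤ n) (hr : 1 ≤ r) (hrn : r ≤ n - 1) :
    (((Finset.univ.filter (fun π : Equiv.Perm (Fin n) =>
        r ≤ ((π.symm ⟨n - 1, by omega⟩ : Fin n) : ℕ) ∧
        ∀ j : Fin n, (j : ℕ) < ((π.symm ⟨n - 1, by omega⟩ : Fin n) : ℕ) →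
          ∃ j' : Fin n, (j' : ℕ) < r ∧ π j ≤ π j')).card : ℝ) / (Nat.factorial n : ℝ)
      = ((r : ℝ) / (n : ℝ)) * ∑ i ∈ Finset.Icc (r + 1) n, 1 / ((i : ℝ) - 1))
    ∧ ((r : ℝ) / (n : ℝ)) * Real.log ((n : ℝ) / (r : ℝ))
      < ((r : ℝ) / (n : ℝ)) * ∑ i ∈ Finset.Icc (r + 1) n, 1 / ((i : ℝ) - 1) := by
  have hnpos : 0 < n := by omega
  have hrn' : r < n := by omega
  set top : Fin n := ⟨n - 1, by omega⟩ with htop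
  set F : Finset (Fin n) := univ.filter (fun i : Fin n => r ≤ (i:ℕ)) with hF
  set c : Fin n → ℕ := fun i => (A top i ⟨0, hnpos⟩).card with hc
  -- decomposition of the event by the position of the maximum
  have hE : (Finset.univ.filter (fun π : Equiv.Perm (Fin n) =>
        r ≤ ((π.symm top : Fin n) : ℕ) ∧
        ∀ j : Fin n, (j : ℕ) < ((π.symm top : Fin n) : ℕ) →
          ∃ j' : Fin n, (j' : ℕ) < r ∧ π j ≤ π j')).card
      = ∑ i ∈ F, (univ.filter fun σ : Perm (Fin n) => σ i = top ∧
          ∀ j : Fin n, (j:ℕ) < (i:ℕ) → ∃ j' : Fin n, (j':ℕ) < r ∧ σ j ≤ σ j').card := by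
    rw [Finset.card_eq_sum_card_fiberwise (f := fun σ : Perm (Fin n) => σ.symm top)
      (t := F) (fun σ hσ => by
        simp only [hF, Finset.mem_filter, Finset.mem_univ, true_and] at ⊢
        exact Finset.mem_coe.mpr (Finset.mem_filter.mpr ⟨Finset.mem_univ _, (Finset.mem_filter.mp hσ).2.1⟩))]
    apply Finset.sum_congr rfl
    intro i hi
    congr 1
    ext σ
    simp only [Finset.mem_filter, Finset.mem_univ, true_and]
    constructor
    · rintro ⟨⟨h1, h2⟩, h3⟩
      rw [h3] at h2
      refine ⟨by rw [← h3, Equiv.apply_symm_apply], h2⟩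
    · rintro ⟨h1, h2⟩
      have h3 : σ.symm top = i := by rw [← h1, Equiv.symm_apply_apply]
      have hri : r ≤ (i:ℕ) := by simpa [hF] using hi
      exact ⟨⟨by rw [h3]; exact hri, by rw [h3]; exact h2⟩, h3⟩
  -- per-fiber counts
  have hSc : ∀ i ∈ F, (univ.filter fun σ : Perm (Fin n) => σ i = top ∧
        ∀ j : Fin n, (j:ℕ) < (i:ℕ) → ∃ j' : Fin n, (j':ℕ) < r ∧ σ j ≤ σ j').card
      = r * c i := by
    intro i hi
    have hri : r ≤ (i:ℕ) := by simpa [hF] using hi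
    have hi0 : 0 < (i:ℕ) := lt_of_lt_of_le hr hri
    rw [card_S_eq top i hr hri]
    rw [Finset.sum_congr rfl (fun k hk => card_A_eq top i
      (lt_of_lt_of_le (by simpa using hk) hri) hi0 (k' := ⟨0, hnpos⟩)),
      Finset.sum_const, card_filter_lt_fin hrn', smul_eq_mul]
  have hBc : ∀ i ∈ F, n * ((i:ℕ) * c i) = n.factorial := by
    intro i hi
    have hri : r ≤ (i:ℕ) := by simpa [hF] using hi
    have hi0 : 0 < (i:ℕ) := lt_of_lt_of_le hr hri
    have h1 := key_count i top
    rw [card_B_eq top i hi0] at h1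
    rw [Finset.sum_congr rfl (fun k hk => card_A_eq top i
      (Fin.lt_def.mp (Finset.mem_Iio.mp hk)) hi0 (k' := ⟨0, hnpos⟩)),
      Finset.sum_const, Fin.card_Iio, smul_eq_mul] at h1
    exact h1
  -- main equality
  have hfac : (0:ℝ) < (n.factorial : ℝ) := by exact_mod_cast n.factorial_pos
  have hmain : ((Finset.univ.filter (fun π : Equiv.Perm (Fin n) =>
        r ≤ ((π.symm top : Fin n) : ℕ) ∧
        ∀ j : Fin n, (j : ℕ) < ((π.symm top : Fin n) : ℕ) →
          ∃ j' : Fin n, (j' : ℕ) < r ∧ π j ≤ π j')).card : ℝ) / (n.factorial : ℝ)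
      = ∑ i ∈ F, (r : ℝ) / ((n:ℝ) * (i:ℕ)) := by
    rw [hE]
    push_cast [Finset.sum_congr rfl hSc]
    rw [Finset.sum_div]
    apply Finset.sum_congr rfl
    intro i hi
    have hb := hBc i hi
    have hcpos : 0 < c i := by
      rcases Nat.eq_zero_or_pos (c i) with h | h
      · exfalso; rw [h, mul_zero, mul_zero] at hb
        exact (Nat.factorial_pos n).ne' hb.symm
      · exact h
    have hi0 : 0 < (i:ℕ) := lt_of_lt_of_le hr (by simpa [hF] using hi)
    have hbR : ((n.factorial : ℝ)) = (n:ℝ) * ((i:ℕ) * (c i : ℝ)) := by exact_mod_cast hb.symm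
    rw [hbR]
    have h1 : ((i:ℕ):ℝ) ≠ 0 := by positivity
    have h2 : ((c i:ℕ):ℝ) ≠ 0 := by positivity
    have h3 : ((n:ℕ):ℝ) ≠ 0 := by positivity
    field_simp
  -- sum over F equals (r/n) * harmonic piece
  have hsumF : ∑ i ∈ F, (r : ℝ) / ((n:ℝ) * (i:ℕ))
      = ((r:ℝ)/(n:ℝ)) * ∑ j ∈ Finset.Ico r n, 1 / (j:ℝ) := by
    rw [hF, Finset.sum_filter, Fin.sum_univ_eq_sum_range
      (fun j => if r ≤ j then (r:ℝ) / ((n:ℝ) * j) else 0), ← Finset.sum_filter]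
    have hset : (Finset.range n).filter (fun j => r ≤ j) = Finset.Ico r n := by
      ext j; simp [Finset.mem_Ico, and_comm]
    rw [hset, Finset.mul_sum]
    apply Finset.sum_congr rfl
    intro j _
    rw [mul_one_div, div_div]
  have key : ((Finset.univ.filter (fun π : Equiv.Perm (Fin n) =>
        r ≤ ((π.symm top : Fin n) : ℕ) ∧
        ∀ j : Fin n, (j : ℕ) < ((π.symm top : Fin n) : ℕ) →
          ∃ j' : Fin n, (j' : ℕ) < r ∧ π j ≤ π j')).card : ℝ) / (n.factorial : ℝ)
      = ((r : ℝ) / (n : ℝ)) * ∑ i ∈ Finset.Icc (r + 1) n, 1 / ((i : ℝ) - 1) := by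
    rw [hmain, hsumF, sum_Icc_eq_sum_Ico]
  constructor
  · exact key
  · rw [sum_Icc_eq_sum_Ico]
    have hpos : (0:ℝ) < (r:ℝ)/(n:ℝ) := by positivity
    exact mul_lt_mul_of_pos_left (log_lt_sum r n hr hrn') hpos
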